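/- With the data below, define w(t, i) := (exp((T − t)·A)·𝟏)_i and v(t, i, c) := c + (1/k)·log w(t, i). Then: (a) w(t, i) > 0 for all t ∈ [0, T] and all i, so v is well defined; (b) v(T, i, c) = c for all i and all c ∈ ℝ; and (c) for all t ∈ [0, T], all i ∈ {0, …, 2N} and all c ∈ ℝ, ∂ₜ v(t, i, c) − P_i + λ⁺·exp(k·(Z⁺_i − s)·Δ⁺_i) · sSup{ exp(−k·p·Z⁺_i·Δ⁺_i)·( v(t, i+1, c + p·Z⁺_i·Δ⁺_i) − v(t, i, c) ) : p ∈ ℝ } · [i < 2N] + λ⁻·exp(−k·(Z⁻_i − s)·Δ⁻_i) · sSup{ exp(−k·m·Z⁻_i·Δ⁻_i)·( v(t, i−1, c + m·Z⁻_i·Δ⁻_i) − v(t, i, c) ) : m ∈ ℝ } · [i > 0] = 0, where each sSup is the supremum over the indicated set of real numbers (each of these sets is nonempty and bounded above, so the suprema are finite). -/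

import Mathlib

open NormedSpace

section Helpers

variable {m : Type*} [Fintype m] [DecidableEq m]

private lemma hasDerivAt_expEntry (A : Matrix m m ℝ) (T t : ℝ) (i : m) :
    HasDerivAt (fun u : ℝ => (exp ((T - u) • A)).mulVec 1 i)
      (-(A.mulVec ((exp ((T - t) • A)).mulVec 1) i)) t := by
  letI : SeminormedRing (Matrix m m ℝ) := Matrix.linftyOpSemiNormedRing
  letI : NormedRing (Matrix m m ℝ) := Matrix.linftyOpNormedRing
  letI : NormedAlgebra ℝ (Matrix m m ℝ) := Matrix.linftyOpNormedAlgebra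
  have h1 : HasDerivAt (fun u : ℝ => exp (u • A)) (exp ((T-t) • A) * A) (T-t) :=
    hasDerivAt_exp_smul_const A (T-t)
  have h2 : HasDerivAt (fun u : ℝ => T - u) (-1) t := by
    simpa using (hasDerivAt_id t).const_sub T
  have h3 : HasDerivAt (fun u : ℝ => exp ((T-u) • A))
      ((-1 : ℝ) • (exp ((T-t) • A) * A)) t := h1.scomp t h2
  let L : Matrix m m ℝ →ₗ[ℝ] ℝ :=
    { toFun := fun M => M.mulVec 1 i
      map_add' := fun M N => by simp [Matrix.add_mulVec]
      map_smul' := fun c M => by simp [Matrix.smul_mulVec] }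
  have hLc : Continuous L := by
    have : (fun M : Matrix m m ℝ => M.mulVec 1 i) = fun M => ∑ j, M i j * 1 := by
      funext M; simp [Matrix.mulVec, dotProduct]
    show Continuous fun M : Matrix m m ℝ => M.mulVec 1 i
    rw [this]
    exact continuous_finset_sum _ fun j _ => (continuous_id.matrix_elem i j).mul continuous_const
  let L' : Matrix m m ℝ →L[ℝ] ℝ := ⟨L, hLc⟩
  have h4 := L'.hasFDerivAt.comp_hasDerivAt t h3
  have hcomm : exp ((T-t) • A) * A = A * exp ((T-t) • A) :=
    (((Commute.refl A).smul_left (T-t)).exp_left).eq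
  refine h4.congr_deriv (Eq.symm ?_)
  show -(A.mulVec ((exp ((T - t) • A)).mulVec 1) i) = L' ((-1 : ℝ) • (exp ((T-t) • A) * A))
  rw [hcomm]
  show -(A.mulVec ((exp ((T - t) • A)).mulVec 1) i)
      = (((-1 : ℝ) • (A * exp ((T-t) • A))).mulVec 1) i
  rw [Matrix.smul_mulVec, ← Matrix.mulVec_mulVec]
  simp

private lemma exp_entry_pos [Nonempty m] (M : Matrix m m ℝ)
    (hoff : ∀ i j : m, i ≠ j → 0 ≤ M i j) (i : m) :
    0 < (exp M).mulVec 1 i := by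
  letI : SeminormedRing (Matrix m m ℝ) := Matrix.linftyOpSemiNormedRing
  letI : NormedRing (Matrix m m ℝ) := Matrix.linftyOpNormedRing
  letI : NormedAlgebra ℝ (Matrix m m ℝ) := Matrix.linftyOpNormedAlgebra
  set μ : ℝ := Finset.univ.sup' Finset.univ_nonempty (fun j => -(M j j)) with hμ
  set B : Matrix m m ℝ := M + μ • 1 with hB
  have hBnn : ∀ a b : m, 0 ≤ B a b := by
    intro a b
    by_cases hab : a = b
    · subst hab
      have h1 : -(M a a) ≤ μ := by
        rw [hμ]; exact Finset.le_sup' (fun j => -(M j j)) (Finset.mem_univ a)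
      simp only [hB, Matrix.add_apply, Matrix.smul_apply, Matrix.one_apply_eq, smul_eq_mul,
        mul_one]
      linarith
    · simp only [hB, Matrix.add_apply, Matrix.smul_apply, Matrix.one_apply_ne hab, smul_eq_mul,
        mul_zero, add_zero]
      exact hoff a b hab
  have hBpow : ∀ n : ℕ, ∀ a b : m, 0 ≤ (B ^ n) a b := by
    intro n
    induction n with
    | zero =>
      intro a b; rw [pow_zero, Matrix.one_apply]
      split <;> norm_num
    | succ n ih =>
      intro a b; rw [pow_succ, Matrix.mul_apply]
      exact Finset.sum_nonneg fun j _ => mul_nonneg (ih a j) (hBnn j b)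
  have hM : M = B + (-μ) • (1 : Matrix m m ℝ) := by
    rw [hB, add_assoc, ← add_smul]; simp
  have hcomm : Commute B ((-μ) • (1 : Matrix m m ℝ)) := (Commute.one_right B).smul_right _
  have hsplit : exp M = exp B * exp ((-μ) • (1 : Matrix m m ℝ)) := by
    rw [hM]; exact Matrix.exp_add_of_commute _ _ hcomm
  have hexp1 : exp ((-μ) • (1 : Matrix m m ℝ)) = Real.exp (-μ) • (1 : Matrix m m ℝ) := by
    have h1 : ((-μ) • (1 : Matrix m m ℝ)) = algebraMap ℝ _ (-μ) :=
      (Algebra.algebraMap_eq_smul_one _).symm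
    erw [h1, ← algebraMap_exp_comm, Algebra.algebraMap_eq_smul_one, Real.exp_eq_exp_ℝ]
  have hentry : ∀ a b : m, (1 : Matrix m m ℝ) a b ≤ (exp B) a b := by
    intro a b
    have hs : Summable fun n : ℕ => ((n.factorial : ℝ)⁻¹) • B ^ n := expSeries_summable' (𝕂 := ℝ) B
    let L : Matrix m m ℝ →ₗ[ℝ] ℝ :=
      { toFun := fun M => M a b
        map_add' := fun X Y => rfl
        map_smul' := fun c X => rfl }
    have hLc : Continuous L := continuous_id.matrix_elem a b
    let L' : Matrix m m ℝ →L[ℝ] ℝ := ⟨L, hLc⟩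
    have hmap : (exp B) a b = ∑' n : ℕ, ((n.factorial : ℝ)⁻¹) * ((B ^ n) a b) := by
      have := L'.map_tsum hs
      rw [exp_eq_tsum ℝ]; exact this
    rw [hmap]
    have hs' : Summable fun n : ℕ => ((n.factorial : ℝ)⁻¹) * ((B ^ n) a b) := by
      have := hs.map L'.toLinearMap.toAddMonoidHom hLc
      exact this
    have h0 : ((Nat.factorial 0 : ℝ)⁻¹) * ((B ^ 0) a b) ≤
        ∑' n, ((n.factorial : ℝ)⁻¹) * ((B ^ n) a b) :=
      Summable.le_tsum hs' 0 fun n _ => mul_nonneg (by positivity) (hBpow n a b)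
    simpa using h0
  have hfin : (exp M).mulVec 1 i = Real.exp (-μ) * ((exp B).mulVec 1 i) := by
    rw [hsplit, hexp1, mul_smul_comm, mul_one, Matrix.smul_mulVec]
    simp
  rw [hfin]
  have h2 : (1 : ℝ) ≤ (exp B).mulVec 1 i := by
    have : ((1 : Matrix m m ℝ).mulVec 1 i) ≤ (exp B).mulVec 1 i := by
      simp only [Matrix.mulVec, dotProduct, Pi.one_apply, mul_one]
      exact Finset.sum_le_sum fun j _ => hentry i j
    simpa using this
  have := Real.exp_pos (-μ)
  nlinarith

end Helpers

private lemma isGreatest_fee (k a b : ℝ) (hk : 0 < k) (ha : 0 < a) :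
    IsGreatest (Set.range fun p : ℝ => Real.exp (-(k * p * a)) * (p * a + b))
      (Real.exp (k * b - 1) / k) := by
  constructor
  · refine ⟨(1/k - b)/a, ?_⟩
    show Real.exp (-(k * ((1/k - b)/a) * a)) * ((1/k - b)/a * a + b) = Real.exp (k * b - 1) / k
    have hpa : (1/k - b)/a * a = 1/k - b := div_mul_cancel₀ _ ha.ne'
    have h1 : -(k * ((1/k - b)/a) * a) = k * b - 1 := by
      rw [mul_assoc, hpa]; field_simp; ring
    rw [hpa, h1]; field_simp; ring
  · rintro y ⟨p, rfl⟩
    show Real.exp (-(k * p * a)) * (p * a + b) ≤ Real.exp (k * b - 1) / k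
    have key : k * (p*a+b) ≤ Real.exp (k * (p*a+b) - 1) := by
      have := Real.add_one_le_exp (k * (p*a+b) - 1); linarith
    have h2 : Real.exp (-(k*p*a)) = Real.exp (k*b - 1) * Real.exp (1 - k*(p*a+b)) := by
      rw [← Real.exp_add]; congr 1; ring
    have h4 : Real.exp (k*(p*a+b)-1) * Real.exp (1-k*(p*a+b)) = 1 := by
      rw [← Real.exp_add]; norm_num
    have h5 : (k*(p*a+b)) * Real.exp (1-k*(p*a+b)) ≤ 1 := by
      nlinarith [Real.exp_pos (1-k*(p*a+b))]
    rw [h2]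
    rw [div_eq_mul_inv, mul_assoc]
    have hE := Real.exp_pos (k*b-1)
    have h6 : Real.exp (1-k*(p*a+b)) * (p*a+b) ≤ k⁻¹ := by
      have h7 : (k*(p*a+b)) * Real.exp (1-k*(p*a+b)) = k * (Real.exp (1-k*(p*a+b)) * (p*a+b)) := by ring
      rw [h7] at h5
      calc Real.exp (1-k*(p*a+b)) * (p*a+b) = k * (Real.exp (1-k*(p*a+b)) * (p*a+b)) / k := by
            field_simp
        _ ≤ 1 / k := by gcongr
        _ = k⁻¹ := one_div k
    nlinarith



/-- The function `v(t, i, c) = c + (1/k) log ((exp ((T - t) • A) ⬝ 𝟏)_i)` is well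
defined, has terminal value `c`, and solves the Hamilton–Jacobi–Bellman equation of
the AMM fee-setting problem with constant oracle price, where the suprema over the
fee choices are finite. -/
theorem stmt6 (N : ℕ) (hN : 1 ≤ N)
    (Δp Δm Zp Zm P : Fin (2 * N + 1) → ℝ)
    (hΔp : ∀ i : Fin (2 * N + 1), (i : ℕ) < 2 * N → 0 < Δp i)
    (hΔm : ∀ i : Fin (2 * N + 1), 0 < (i : ℕ) → 0 < Δm i)
    (hZp : ∀ i : Fin (2 * N + 1), (i : ℕ) < 2 * N → 0 < Zp i)
    (hZm : ∀ i : Fin (2 * N + 1), 0 < (i : ℕ) → 0 < Zm i)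
    (lp lm k s T : ℝ) (hlp : 0 < lp) (hlm : 0 < lm) (hk : 0 < k) (hT : 0 < T)
    (A : Matrix (Fin (2 * N + 1)) (Fin (2 * N + 1)) ℝ)
    (hA : ∀ i j : Fin (2 * N + 1), A i j =
      if (j : ℕ) = (i : ℕ) then -(k * P i)
      else if (j : ℕ) = (i : ℕ) + 1 then
        lp * Real.exp (-(k * s * Δp i) - 1) * Real.exp (k * Zp i * Δp i)
      else if (j : ℕ) + 1 = (i : ℕ) then
        lm * Real.exp (k * s * Δm i - 1) * Real.exp (-(k * Zm i * Δm i))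
      else 0)
    (w : ℝ → Fin (2 * N + 1) → ℝ)
    (hw : ∀ t : ℝ, w t = (NormedSpace.exp ((T - t) • A)).mulVec 1)
    (v : ℝ → Fin (2 * N + 1) → ℝ → ℝ)
    (hv : ∀ t : ℝ, ∀ i : Fin (2 * N + 1), ∀ c : ℝ,
      v t i c = c + (1 / k) * Real.log (w t i)) :
    -- (a) positivity, so `v` is well defined
    (∀ t ∈ Set.Icc (0 : ℝ) T, ∀ i : Fin (2 * N + 1), 0 < w t i) ∧
    -- (b) terminal condition
    (∀ i : Fin (2 * N + 1), ∀ c : ℝ, v T i c = c) ∧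
    -- (c) HJB equation, with the suprema being over nonempty bounded-above sets
    (∀ t ∈ Set.Icc (0 : ℝ) T, ∀ i : Fin (2 * N + 1), ∀ c : ℝ,
      (∀ h : (i : ℕ) < 2 * N,
        BddAbove (Set.range fun p : ℝ =>
          Real.exp (-(k * p * Zp i * Δp i)) *
            (v t ⟨(i : ℕ) + 1, by omega⟩ (c + p * Zp i * Δp i) - v t i c))) ∧
      (∀ h : 0 < (i : ℕ),
        BddAbove (Set.range fun m : ℝ =>
          Real.exp (-(k * m * Zm i * Δm i)) *
            (v t ⟨(i : ℕ) - 1, by omega⟩ (c + m * Zm i * Δm i) - v t i c))) ∧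
      deriv (fun τ : ℝ => v τ i c) t - P i
        + (if h : (i : ℕ) < 2 * N then
            lp * Real.exp (k * (Zp i - s) * Δp i) *
              sSup (Set.range fun p : ℝ =>
                Real.exp (-(k * p * Zp i * Δp i)) *
                  (v t ⟨(i : ℕ) + 1, by omega⟩ (c + p * Zp i * Δp i) - v t i c))
          else 0)
        + (if h : 0 < (i : ℕ) then
            lm * Real.exp (-(k * (Zm i - s) * Δm i)) *
              sSup (Set.range fun m : ℝ =>
                Real.exp (-(k * m * Zm i * Δm i)) *
                  (v t ⟨(i : ℕ) - 1, by omega⟩ (c + m * Zm i * Δm i) - v t i c))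
          else 0) = 0) := by
  have h2N1 : 0 < 2 * N + 1 := by omega
  -- (a) positivity
  have hpos : ∀ t ∈ Set.Icc (0:ℝ) T, ∀ i : Fin (2*N+1), 0 < w t i := by
    intro t ht i
    rw [hw]
    refine exp_entry_pos _ (fun a b hab => ?_) i
    have hTt : 0 ≤ T - t := by linarith [ht.2]
    have hAab : 0 ≤ A a b := by
      rw [hA a b, if_neg (fun h => hab (Fin.ext h).symm)]
      split_ifs <;> positivity
    have he : ((T - t) • A) a b = (T - t) * A a b := rfl
    rw [he]
    exact mul_nonneg hTt hAab
  refine ⟨hpos, ?_, ?_⟩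
  · -- (b) terminal condition
    intro i c
    rw [hv, hw]
    simp [sub_self, zero_smul, NormedSpace.exp_zero, Matrix.one_mulVec]
  -- (c) HJB equation
  intro t ht i c
  have hWi := hpos t ht i
  -- derivative of v in time
  have hdw : HasDerivAt (fun u : ℝ => w u i) (-(A.mulVec (w t) i)) t := by
    have h1 : (fun u : ℝ => (NormedSpace.exp ((T - u) • A)).mulVec 1 i)
        = fun u : ℝ => w u i := by funext u; rw [hw]
    rw [← h1, hw t]
    exact hasDerivAt_expEntry A T t i
  have hdv : HasDerivAt (fun τ : ℝ => v τ i c) (1/k * (-(A.mulVec (w t) i) / w t i)) t := by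
    have h1 : (fun τ : ℝ => v τ i c) = fun τ => c + 1/k * Real.log (w τ i) := by
      funext τ; rw [hv]
    rw [h1]
    exact ((hdw.log hWi.ne').const_mul (1/k)).const_add c
  -- the sum appearing in (A w)_i
  have hsum : A.mulVec (w t) i = -(k * P i) * w t i
      + (if hp : (i:ℕ) < 2*N then
          (lp * Real.exp (-(k * s * Δp i) - 1) * Real.exp (k * Zp i * Δp i))
            * w t ⟨(i:ℕ)+1, by omega⟩ else 0)
      + (if hm : 0 < (i:ℕ) then
          (lm * Real.exp (k * s * Δm i - 1) * Real.exp (-(k * Zm i * Δm i)))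
            * w t ⟨(i:ℕ)-1, by omega⟩ else 0) := by
    have hsplit : ∀ j : Fin (2*N+1), A i j * w t j =
        (if j = i then -(k * P i) * w t i else 0)
        + (if (j:ℕ) = (i:ℕ)+1 then
            (lp * Real.exp (-(k * s * Δp i) - 1) * Real.exp (k * Zp i * Δp i)) * w t j else 0)
        + (if (j:ℕ)+1 = (i:ℕ) then
            (lm * Real.exp (k * s * Δm i - 1) * Real.exp (-(k * Zm i * Δm i))) * w t j else 0) := by
      intro j
      rw [hA i j]
      by_cases h1 : (j:ℕ) = (i:ℕ)
      · have hj : j = i := Fin.ext h1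
        subst hj
        rw [if_pos rfl, if_pos rfl, if_neg (by omega), if_neg (by omega)]
        ring
      · rw [if_neg h1, if_neg (fun hj : j = i => h1 (by rw [hj]))]
        by_cases h2 : (j:ℕ) = (i:ℕ)+1
        · rw [if_pos h2, if_pos h2, if_neg (by omega)]; ring
        · rw [if_neg h2, if_neg h2]
          by_cases h3 : (j:ℕ)+1 = (i:ℕ)
          · rw [if_pos h3, if_pos h3]; ring
          · rw [if_neg h3, if_neg h3]; ring
    have hmv : A.mulVec (w t) i = ∑ j, A i j * w t j := by
      simp [Matrix.mulVec, dotProduct]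
    rw [hmv, Finset.sum_congr rfl fun j _ => hsplit j, Finset.sum_add_distrib,
      Finset.sum_add_distrib]
    have s1 : ∑ j : Fin (2*N+1), (if j = i then -(k * P i) * w t i else 0)
        = -(k * P i) * w t i := by
      rw [Finset.sum_ite_eq' Finset.univ i (fun _ => -(k * P i) * w t i)]
      simp
    have s2 : ∑ j : Fin (2*N+1), (if (j:ℕ) = (i:ℕ)+1 then
          (lp * Real.exp (-(k * s * Δp i) - 1) * Real.exp (k * Zp i * Δp i)) * w t j else 0)
        = (if hp : (i:ℕ) < 2*N then
          (lp * Real.exp (-(k * s * Δp i) - 1) * Real.exp (k * Zp i * Δp i))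
            * w t ⟨(i:ℕ)+1, by omega⟩ else 0) := by
      by_cases hp : (i:ℕ) < 2*N
      · rw [dif_pos hp]
        have hiff : ∀ j : Fin (2*N+1), ((j:ℕ) = (i:ℕ)+1) ↔
            (j = (⟨(i:ℕ)+1, by omega⟩ : Fin (2*N+1))) := by
          intro j; rw [Fin.ext_iff]
        simp_rw [hiff]
        rw [Finset.sum_ite_eq' Finset.univ]
        simp
      · rw [dif_neg hp]
        refine Finset.sum_eq_zero fun j _ => ?_
        rw [if_neg]
        have := j.isLt; have := i.isLt
        omega
    have s3 : ∑ j : Fin (2*N+1), (if (j:ℕ)+1 = (i:ℕ) then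
          (lm * Real.exp (k * s * Δm i - 1) * Real.exp (-(k * Zm i * Δm i))) * w t j else 0)
        = (if hm : 0 < (i:ℕ) then
          (lm * Real.exp (k * s * Δm i - 1) * Real.exp (-(k * Zm i * Δm i)))
            * w t ⟨(i:ℕ)-1, by omega⟩ else 0) := by
      by_cases hm : 0 < (i:ℕ)
      · rw [dif_pos hm]
        have hiff : ∀ j : Fin (2*N+1), ((j:ℕ)+1 = (i:ℕ)) ↔
            (j = (⟨(i:ℕ)-1, by omega⟩ : Fin (2*N+1))) := by
          intro j; rw [Fin.ext_iff]; simp only [Fin.val_mk]; omega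
        simp_rw [hiff]
        rw [Finset.sum_ite_eq' Finset.univ]
        simp
      · rw [dif_neg hm]
        refine Finset.sum_eq_zero fun j _ => ?_
        rw [if_neg]
        omega
    rw [s1, s2, s3]
  -- supremum computations
  have hP : ∀ hp : (i:ℕ) < 2*N,
      BddAbove (Set.range fun p : ℝ =>
        Real.exp (-(k * p * Zp i * Δp i)) *
          (v t ⟨(i:ℕ) + 1, by omega⟩ (c + p * Zp i * Δp i) - v t i c)) ∧
      sSup (Set.range fun p : ℝ =>
        Real.exp (-(k * p * Zp i * Δp i)) *
          (v t ⟨(i:ℕ) + 1, by omega⟩ (c + p * Zp i * Δp i) - v t i c))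
        = w t ⟨(i:ℕ)+1, by omega⟩ / w t i * Real.exp (-1) / k := by
    intro hp
    have hap : 0 < Zp i * Δp i := mul_pos (hZp i hp) (hΔp i hp)
    have hWp := hpos t ht ⟨(i:ℕ)+1, by omega⟩
    have hfp : (fun p : ℝ =>
        Real.exp (-(k * p * Zp i * Δp i)) *
          (v t ⟨(i:ℕ) + 1, by omega⟩ (c + p * Zp i * Δp i) - v t i c))
        = fun p : ℝ => Real.exp (-(k * p * (Zp i * Δp i))) *
            (p * (Zp i * Δp i) +
              (1/k * (Real.log (w t ⟨(i:ℕ)+1, by omega⟩) - Real.log (w t i)))) := by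
      funext p
      rw [hv, hv, show -(k * p * Zp i * Δp i) = -(k * p * (Zp i * Δp i)) from by ring]
      ring
    have hgr := isGreatest_fee k (Zp i * Δp i)
      (1/k * (Real.log (w t ⟨(i:ℕ)+1, by omega⟩) - Real.log (w t i))) hk hap
    constructor
    · rw [hfp]; exact hgr.bddAbove
    · rw [hfp, hgr.csSup_eq,
        show k * (1/k * (Real.log (w t ⟨(i:ℕ)+1, by omega⟩) - Real.log (w t i))) - 1
          = (Real.log (w t ⟨(i:ℕ)+1, by omega⟩) - Real.log (w t i)) + (-1) from by
            field_simp; ring,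
        Real.exp_add, Real.exp_sub, Real.exp_log hWp, Real.exp_log hWi]
  have hM : ∀ hm : 0 < (i:ℕ),
      BddAbove (Set.range fun q : ℝ =>
        Real.exp (-(k * q * Zm i * Δm i)) *
          (v t ⟨(i:ℕ) - 1, by omega⟩ (c + q * Zm i * Δm i) - v t i c)) ∧
      sSup (Set.range fun q : ℝ =>
        Real.exp (-(k * q * Zm i * Δm i)) *
          (v t ⟨(i:ℕ) - 1, by omega⟩ (c + q * Zm i * Δm i) - v t i c))
        = w t ⟨(i:ℕ)-1, by omega⟩ / w t i * Real.exp (-1) / k := by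
    intro hm
    have hap : 0 < Zm i * Δm i := mul_pos (hZm i hm) (hΔm i hm)
    have hWp := hpos t ht ⟨(i:ℕ)-1, by omega⟩
    have hfp : (fun q : ℝ =>
        Real.exp (-(k * q * Zm i * Δm i)) *
          (v t ⟨(i:ℕ) - 1, by omega⟩ (c + q * Zm i * Δm i) - v t i c))
        = fun q : ℝ => Real.exp (-(k * q * (Zm i * Δm i))) *
            (q * (Zm i * Δm i) +
              (1/k * (Real.log (w t ⟨(i:ℕ)-1, by omega⟩) - Real.log (w t i)))) := by
      funext q
      rw [hv, hv, show -(k * q * Zm i * Δm i) = -(k * q * (Zm i * Δm i)) from by ring]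
      ring
    have hgr := isGreatest_fee k (Zm i * Δm i)
      (1/k * (Real.log (w t ⟨(i:ℕ)-1, by omega⟩) - Real.log (w t i))) hk hap
    constructor
    · rw [hfp]; exact hgr.bddAbove
    · rw [hfp, hgr.csSup_eq,
        show k * (1/k * (Real.log (w t ⟨(i:ℕ)-1, by omega⟩) - Real.log (w t i))) - 1
          = (Real.log (w t ⟨(i:ℕ)-1, by omega⟩) - Real.log (w t i)) + (-1) from by
            field_simp; ring,
        Real.exp_add, Real.exp_sub, Real.exp_log hWp, Real.exp_log hWi]
  refine ⟨fun hp => (hP hp).1, fun hm => (hM hm).1, ?_⟩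
  rw [hdv.deriv]
  by_cases hp : (i:ℕ) < 2*N
  · by_cases hm : 0 < (i:ℕ)
    · rw [dif_pos hp, dif_pos hm] at hsum
      rw [dif_pos hp, dif_pos hm, (hP hp).2, (hM hm).2, hsum]
      have he1 : Real.exp (-(k * s * Δp i) - 1) * Real.exp (k * Zp i * Δp i)
          = Real.exp (k * (Zp i - s) * Δp i) * Real.exp (-1) := by
        rw [← Real.exp_add, ← Real.exp_add]; congr 1; ring
      have he2 : Real.exp (k * s * Δm i - 1) * Real.exp (-(k * Zm i * Δm i))
          = Real.exp (-(k * (Zm i - s) * Δm i)) * Real.exp (-1) := by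
        rw [← Real.exp_add, ← Real.exp_add]; congr 1; ring
      rw [mul_assoc lp (Real.exp (-(k * s * Δp i) - 1)) (Real.exp (k * Zp i * Δp i)), he1,
        mul_assoc lm (Real.exp (k * s * Δm i - 1)) (Real.exp (-(k * Zm i * Δm i))), he2]
      field_simp
      ring
    · rw [dif_pos hp, dif_neg hm] at hsum
      rw [dif_pos hp, dif_neg hm, (hP hp).2, hsum]
      have he1 : Real.exp (-(k * s * Δp i) - 1) * Real.exp (k * Zp i * Δp i)
          = Real.exp (k * (Zp i - s) * Δp i) * Real.exp (-1) := by
        rw [← Real.exp_add, ← Real.exp_add]; congr 1; ring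
      rw [mul_assoc lp (Real.exp (-(k * s * Δp i) - 1)) (Real.exp (k * Zp i * Δp i)), he1]
      field_simp
      ring
  · by_cases hm : 0 < (i:ℕ)
    · rw [dif_neg hp, dif_pos hm] at hsum
      rw [dif_neg hp, dif_pos hm, (hM hm).2, hsum]
      have he2 : Real.exp (k * s * Δm i - 1) * Real.exp (-(k * Zm i * Δm i))
          = Real.exp (-(k * (Zm i - s) * Δm i)) * Real.exp (-1) := by
        rw [← Real.exp_add, ← Real.exp_add]; congr 1; ring
      rw [mul_assoc lm (Real.exp (k * s * Δm i - 1)) (Real.exp (-(k * Zm i * Δm i))), he2]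
      field_simp
      ring
    · exfalso; omega
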